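/- Let a, b be integers with a + b = N - 1. Let λ, μ ∈ P_N, and define ℓ_i = λ_i - i, m_i = μ_i - i for i ∈ [N]. Then ∇(s_{λ/μ}) = ∑_{i ∈ [N], λ - e_i ∈ P_N} (ℓ_i + a) s_{(λ - e_i)/μ} + ∑_{i ∈ [N], μ + e_i ∈ P_N} (b - m_i) s_{λ/(μ + e_i)}. -/

import Mathlib

open MvPolynomial

/-- The complete homogeneous symmetric polynomial `h_n` in `N` variables,
with `h_n = 0` for `n < 0`. -/
noncomputable def hh (N : ℕ) (n : ℤ) : MvPolynomial (Fin N) ℤ :=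
  if 0 ≤ n then ∑ d ∈ Finset.Nat.antidiagonalTuple N n.toNat, ∏ i, X i ^ d i else 0

/-- The diagonal derivative `∇ = ∂/∂x_1 + ⋯ + ∂/∂x_N`. -/
noncomputable def nabla (N : ℕ) (f : MvPolynomial (Fin N) ℤ) : MvPolynomial (Fin N) ℤ :=
  ∑ i, pderiv i f

/-- `a ∈ P_N`: weakly decreasing tuples of nonnegative integers. -/
def IsPar {N : ℕ} (a : Fin N → ℤ) : Prop :=
  (∀ i j : Fin N, i ≤ j → a j ≤ a i) ∧ ∀ i, 0 ≤ a i

/-- The skew Schur polynomial, defined by the Jacobi–Trudi formula. -/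
noncomputable def skewSchur (N : ℕ) (lam mu : Fin N → ℤ) : MvPolynomial (Fin N) ℤ :=
  Matrix.det (Matrix.of fun i j : Fin N => hh N (lam i - mu j - (i : ℤ) + (j : ℤ)))

/-- The tuple `e_k` with `1` in position `k` and `0` elsewhere. -/
def ee {N : ℕ} (k : Fin N) : Fin N → ℤ := fun i => if i = k then 1 else 0

instance {N : ℕ} (a : Fin N → ℤ) : Decidable (IsPar a) := by unfold IsPar; infer_instance


section aux
open Finset

lemma prod_X_pow (N : ℕ) (d : Fin N → ℕ) :
    (∏ i, (X i : MvPolynomial (Fin N) ℤ) ^ d i)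
      = monomial (Finsupp.equivFunOnFinite.symm d) 1 := by
  rw [← MvPolynomial.prod_X_pow_eq_monomial]
  apply (Finset.prod_subset (Finset.subset_univ _) _).symm
  intro i _ hi
  have : (Finsupp.equivFunOnFinite.symm d) i = 0 := by
    simpa [Finsupp.mem_support_iff] using hi
  simp only [Finsupp.equivFunOnFinite_symm_apply_apply] at this ⊢
  simp [this]

lemma hh_nat (N k : ℕ) : hh N (k : ℤ)
    = ∑ d ∈ Finset.Nat.antidiagonalTuple N k, monomial (Finsupp.equivFunOnFinite.symm d) 1 := by
  rw [hh, if_pos (by positivity)]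
  simp [prod_X_pow]

lemma coeff_hh (N : ℕ) (n : ℤ) (m : Fin N →₀ ℕ) :
    coeff m (hh N n) = if ((∑ i, m i : ℕ) : ℤ) = n then 1 else 0 := by
  rcases le_or_gt 0 n with hn | hn
  · obtain ⟨k, rfl⟩ := Int.eq_ofNat_of_zero_le hn
    rw [hh_nat, coeff_sum]
    have key : ∀ d ∈ Finset.Nat.antidiagonalTuple N k,
        coeff m (monomial (Finsupp.equivFunOnFinite.symm d) (1:ℤ))
          = if d = ⇑m then 1 else 0 := by
      intro d _
      rw [coeff_monomial]
      congr 1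
      rw [Equiv.symm_apply_eq]
      rfl
    rw [Finset.sum_congr rfl key, Finset.sum_ite_eq' _ (⇑m) (fun _ => (1:ℤ))]
    by_cases h : (⇑m) ∈ Finset.Nat.antidiagonalTuple N k
    · rw [if_pos h, if_pos]
      exact_mod_cast (Finset.Nat.mem_antidiagonalTuple.mp h)
    · rw [if_neg h, if_neg]
      intro hc
      exact h (Finset.Nat.mem_antidiagonalTuple.mpr (by exact_mod_cast hc))
  · rw [hh, if_neg (by omega), if_neg (by omega)]
    simp

lemma nabla_hh (N : ℕ) (n : ℤ) :
    nabla N (hh N n) = C ((N:ℤ) + n - 1) * hh N (n - 1) := by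
  rcases lt_or_ge n 1 with hn | hn
  · have h1 : hh N (n-1) = 0 := by rw [hh, if_neg (by omega)]
    rw [h1, mul_zero]
    rcases lt_or_ge n 0 with h2 | h2
    · rw [hh, if_neg (by omega)]; simp [nabla]
    · have hn0 : n = 0 := by omega
      subst hn0
      have h0 : hh N 0 = 1 := by
        rw [show (0:ℤ) = ((0:ℕ):ℤ) from rfl, hh_nat]
        rw [Finset.Nat.antidiagonalTuple_zero_right, Finset.sum_singleton]
        have hz : (Finsupp.equivFunOnFinite.symm (0 : Fin N → ℕ)) = 0 := by ext j; rfl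
        rw [hz, monomial_zero']
        simp
      rw [h0]; simp [nabla]
  · obtain ⟨k, rfl⟩ : ∃ k : ℕ, n = (k:ℤ) + 1 := ⟨(n-1).toNat, by omega⟩
    ext m
    rw [coeff_C_mul, coeff_hh]
    rw [nabla, coeff_sum]
    have hcast : (k:ℤ) + 1 = ((k+1 : ℕ) : ℤ) := by push_cast; ring
    rw [hcast, hh_nat]
    have step : ∀ i : Fin N, coeff m (pderiv i (∑ d ∈ Finset.Nat.antidiagonalTuple N (k+1),
          monomial (Finsupp.equivFunOnFinite.symm d) (1:ℤ)))
        = if (∑ j, m j) = k then ((m i : ℤ) + 1) else 0 := by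
      intro i
      set M1 : Fin N →₀ ℕ := m + Finsupp.single i 1 with hM1
      rw [map_sum, coeff_sum]
      have e1 : ∀ d ∈ Finset.Nat.antidiagonalTuple N (k+1),
          coeff m (pderiv i (monomial (Finsupp.equivFunOnFinite.symm d) (1:ℤ)))
            = if d = (⇑M1 : Fin N → ℕ) then ((m i:ℤ)+1) else 0 := by
        intro d _
        rw [pderiv_monomial, coeff_monomial]
        set D := Finsupp.equivFunOnFinite.symm d with hD
        have hDd : ∀ j, D j = d j := fun j => rfl
        by_cases hcase : d = (⇑M1 : Fin N → ℕ)
        · have hDeq : D = M1 := by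
            ext j; rw [hDd, hcase]
          rw [if_pos hcase, hDeq, hM1, add_tsub_cancel_right, if_pos rfl,
            Finsupp.add_apply, Finsupp.single_eq_same]
          push_cast
          ring
        · rw [if_neg hcase]
          by_cases h2 : D - Finsupp.single i 1 = m
          · have hDi : D i = 0 := by
              by_contra h3
              apply hcase
              funext j
              have hj2 := DFunLike.congr_fun h2 j
              rw [Finsupp.tsub_apply] at hj2
              have : D j = M1 j := by
                rw [hM1, Finsupp.add_apply]
                by_cases hj : j = i
                · subst hj
                  rw [Finsupp.single_eq_same] at hj2 ⊢
                  omega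
                · rw [Finsupp.single_eq_of_ne hj] at hj2 ⊢
                  omega
              rw [← hDd j, this]
            rw [if_pos h2]
            simp [hDi]
          · rw [if_neg h2]
      rw [Finset.sum_congr rfl e1, Finset.sum_ite_eq' _ ((⇑M1 : Fin N → ℕ)) _]
      have hmem : ((⇑M1 : Fin N → ℕ) ∈ Finset.Nat.antidiagonalTuple N (k+1))
          ↔ (∑ j, m j) = k := by
        rw [Finset.Nat.mem_antidiagonalTuple]
        have : ∀ j, M1 j = m j + (Finsupp.single i 1) j := by
          intro j; rw [hM1, Finsupp.add_apply]
        rw [Finset.sum_congr rfl (fun j _ => this j), Finset.sum_add_distrib]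
        have : (∑ j, (Finsupp.single i 1 : Fin N →₀ ℕ) j) = 1 := by
          simp [Finsupp.single_apply]
        rw [this]
        omega
      by_cases hm : (∑ j, m j) = k
      · rw [if_pos (hmem.mpr hm), if_pos hm]
      · rw [if_neg (fun hc => hm (hmem.mp hc)), if_neg hm]
    rw [Finset.sum_congr rfl (fun i _ => step i)]
    by_cases hm : (∑ j, m j) = k
    · rw [if_pos (by rw [hm]; push_cast; ring)]
      simp only [hm, if_true]
      rw [Finset.sum_add_distrib]
      have h1 : (∑ i : Fin N, (m i : ℤ)) = ((∑ j, m j : ℕ) : ℤ) := by push_cast; rfl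
      rw [h1, hm]
      simp [Finset.card_univ]
      ring
    · rw [if_neg (fun hc => hm (by exact_mod_cast (by omega : ((∑ i, m i : ℕ):ℤ) = (k:ℤ))))]
      simp [hm]

variable {A : Type*} [CommRing A] {n : Type*} [DecidableEq n] [Fintype n]

lemma Derivation.map_finset_prod (D : Derivation ℤ A A) {ι : Type*} [DecidableEq ι]
    (s : Finset ι) (f : ι → A) :
    D (∏ i ∈ s, f i) = ∑ i ∈ s, (∏ j ∈ s.erase i, f j) * D (f i) := by
  induction s using Finset.induction_on with
  | empty => simp
  | @insert a s ha ih =>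
    rw [Finset.prod_insert ha, D.leibniz, smul_eq_mul, smul_eq_mul, ih, Finset.mul_sum,
        Finset.sum_insert ha, Finset.erase_insert ha, add_comm]
    congr 1
    apply Finset.sum_congr rfl
    intro i hi
    rw [Finset.erase_insert_of_ne (Ne.symm (fun h : i = a => ha (h ▸ hi))),
        Finset.prod_insert (fun h => ha (Finset.erase_subset _ _ h)), mul_assoc]

lemma Derivation.det_eq (D : Derivation ℤ A A) (M : Matrix n n A) :
    D M.det = ∑ c, (M.updateCol c fun r => D (M r c)).det := by
  rw [Matrix.det_apply', map_sum]
  have key : ∀ σ : Equiv.Perm n,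
      D (((Equiv.Perm.sign σ : ℤ) : A) * ∏ i, M (σ i) i)
        = ∑ c, ((Equiv.Perm.sign σ : ℤ) : A) *
            ((∏ i ∈ Finset.univ.erase c, M (σ i) i) * D (M (σ c) c)) := by
    intro σ
    rw [← zsmul_eq_mul, D.map_smul, D.map_finset_prod, zsmul_eq_mul, Finset.mul_sum]
  rw [Finset.sum_congr rfl (fun σ _ => key σ), Finset.sum_comm]
  apply Finset.sum_congr rfl
  intro c _
  rw [Matrix.det_apply']
  apply Finset.sum_congr rfl
  intro σ _
  congr 1
  rw [← Finset.mul_prod_erase Finset.univ _ (Finset.mem_univ c), Matrix.updateCol_apply,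
      if_pos rfl, mul_comm (D (M (σ c) c))]
  congr 1
  apply Finset.prod_congr rfl
  intro x hx
  rw [Matrix.updateCol_apply, if_neg (Finset.ne_of_mem_erase hx)]

lemma Derivation.det_eq_row (D : Derivation ℤ A A) (M : Matrix n n A) :
    D M.det = ∑ r, (M.updateRow r fun j => D (M r j)).det := by
  rw [← Matrix.det_transpose M, D.det_eq]
  apply Finset.sum_congr rfl
  intro r _
  rw [Matrix.updateCol_transpose, Matrix.det_transpose]
  rfl

lemma det_updateRow_expand (M : Matrix n n A) (r : n) (v : n → A) :
    (M.updateRow r v).det = ∑ j, v j * (M.updateRow r (Pi.single j 1)).det := by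
  have hv : v = ∑ j, Pi.single j (v j) := (Finset.univ_sum_single v).symm
  have expand : (M.updateRow r (∑ j, Pi.single j (v j))).det
      = ∑ j, (M.updateRow r (Pi.single j (v j))).det :=
    (Matrix.detRowAlternating : (n → A) [⋀^n]→ₗ[A] A).toMultilinearMap.map_update_sum
      Finset.univ r (fun j => Pi.single j (v j)) M
  calc (M.updateRow r v).det
      = ∑ j, (M.updateRow r (Pi.single j (v j))).det := by rw [← expand, ← hv]
    _ = ∑ j, v j * (M.updateRow r (Pi.single j 1)).det := by
        refine Finset.sum_congr rfl fun j _ => ?_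
        rw [show (Pi.single j (v j) : n → A) = v j • (Pi.single j 1 : n → A) by
          rw [← Pi.single_smul, smul_eq_mul, mul_one], Matrix.det_updateRow_smul]

lemma det_updateColumn_expand (M : Matrix n n A) (c : n) (v : n → A) :
    (M.updateCol c v).det = ∑ i, v i * (M.updateCol c (Pi.single i 1)).det := by
  rw [← Matrix.det_transpose, ← Matrix.updateRow_transpose, det_updateRow_expand]
  apply Finset.sum_congr rfl
  intro i _
  rw [Matrix.updateRow_transpose, Matrix.det_transpose]

lemma sum_det_updateRow_swap (M : Matrix n n A) (c : n → A) (w : n → n → A) :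
    (∑ r, (M.updateRow r fun j => c j * w r j).det)
      = ∑ j, c j * (M.updateCol j fun i => w i j).det := by
  have lhs : ∀ r, (M.updateRow r fun j => c j * w r j).det
      = ∑ j, (c j * w r j) * M.adjugate j r := by
    intro r
    rw [det_updateRow_expand]
    exact Finset.sum_congr rfl fun j _ => by rw [Matrix.adjugate_apply]
  have rhs : ∀ j, (M.updateCol j fun i => w i j).det = ∑ r, w r j * M.adjugate j r := by
    intro j
    rw [det_updateColumn_expand]
    apply Finset.sum_congr rfl
    intro r _
    congr 1
    rw [← Matrix.det_transpose, ← Matrix.updateRow_transpose, ← Matrix.adjugate_apply,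
      ← Matrix.adjugate_transpose, Matrix.transpose_apply]
  calc (∑ r, (M.updateRow r fun j => c j * w r j).det)
      = ∑ r, ∑ j, (c j * w r j) * M.adjugate j r := Finset.sum_congr rfl fun r _ => lhs r
    _ = ∑ j, ∑ r, (c j * w r j) * M.adjugate j r := Finset.sum_comm
    _ = ∑ j, c j * (M.updateCol j fun i => w i j).det := by
        refine Finset.sum_congr rfl fun j _ => ?_
        rw [rhs j, Finset.mul_sum]
        exact Finset.sum_congr rfl fun r _ => by ring

lemma nabla_det {N : ℕ} (M : Matrix (Fin N) (Fin N) (MvPolynomial (Fin N) ℤ)) :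
    nabla N M.det = ∑ r, (M.updateRow r fun j => nabla N (M r j)).det := by
  have hD : ∀ f, nabla N f = (∑ i : Fin N, pderiv i : Derivation ℤ _ _) f := by
    intro f
    rw [nabla]
    induction (Finset.univ : Finset (Fin N)) using Finset.induction_on with
    | empty => simp
    | @insert a s ha ih => rw [Finset.sum_insert ha, Finset.sum_insert ha, Derivation.add_apply, ih]
  rw [hD]
  refine (Derivation.det_eq_row (∑ i : Fin N, pderiv i : Derivation ℤ _ _) M).trans ?_
  refine Finset.sum_congr rfl fun r _ => ?_
  have he : (fun j => (∑ i : Fin N, pderiv i : Derivation ℤ _ _) (M r j))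
      = fun j => nabla N (M r j) := funext fun j => (hD _).symm
  exact congrArg (fun v => (M.updateRow r v).det) he

lemma isPar_sub {N : ℕ} {lam : Fin N → ℤ} (hlam : IsPar lam) (r : Fin N)
    (hbig : ∀ j, r < j → lam j ≤ lam r - 1) (hpos : 1 ≤ lam r) : IsPar (lam - ee r) := by
  constructor
  · intro i j hij
    rcases eq_or_lt_of_le hij with rfl | hlt
    · exact le_refl _
    · simp only [Pi.sub_apply, ee]
      have h1 : lam j ≤ lam i := hlam.1 i j hij
      by_cases hir : i = r
      · have hrj : r < j := by rw [← hir]; exact hlt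
        have hjr : j ≠ r := ne_of_gt hrj
        rw [if_neg hjr, if_pos hir]
        have h2 := hbig j hrj
        have h3 : lam i = lam r := by rw [hir]
        omega
      · rw [if_neg hir]
        split_ifs <;> omega
  · intro i
    simp only [Pi.sub_apply, ee]
    by_cases hir : i = r
    · subst hir; rw [if_pos rfl]; omega
    · rw [if_neg hir]; have := hlam.2 i; omega

lemma isPar_add {N : ℕ} {mu : Fin N → ℤ} (hmu : IsPar mu) (c : Fin N)
    (hsmall : ∀ i, i < c → mu c + 1 ≤ mu i) : IsPar (mu + ee c) := by
  constructor
  · intro i j hij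
    rcases eq_or_lt_of_le hij with rfl | hlt
    · exact le_refl _
    · simp only [Pi.add_apply, ee]
      have h1 : mu j ≤ mu i := hmu.1 i j hij
      by_cases hjc : j = c
      · have hic2 : i < c := by rw [← hjc]; exact hlt
        have hic : i ≠ c := ne_of_lt hic2
        rw [if_pos hjc, if_neg hic]
        have h2 := hsmall i hic2
        have h3 : mu j = mu c := by rw [hjc]
        omega
      · rw [if_neg hjc]
        split_ifs <;> omega
  · intro i
    have := hmu.2 i
    simp only [Pi.add_apply, ee]
    split_ifs <;> omega

lemma class_sub {N : ℕ} {lam : Fin N → ℤ} (hlam : IsPar lam) (r : Fin N)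
    (h : ¬ IsPar (lam - ee r)) :
    (∃ h1 : (r:ℕ)+1 < N, lam ⟨(r:ℕ)+1, h1⟩ = lam r) ∨ ((r:ℕ)+1 = N ∧ lam r = 0) := by
  by_cases h1 : (r:ℕ)+1 < N
  · left
    refine ⟨h1, ?_⟩
    set r' : Fin N := ⟨(r:ℕ)+1, h1⟩ with hr'
    have hler : r ≤ r' := by simp [Fin.le_def, hr']
    have hle : lam r' ≤ lam r := hlam.1 r r' hler
    by_contra hne
    apply h
    apply isPar_sub hlam r
    · intro j hj
      have hj2 : r' ≤ j := by
        rw [Fin.le_def]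
        rw [Fin.lt_def] at hj
        simpa [hr'] using hj
      have := hlam.1 r' j hj2
      omega
    · have := hlam.2 r'
      omega
  · right
    have h2 : (r:ℕ)+1 = N := by have := r.isLt; omega
    refine ⟨h2, ?_⟩
    by_contra hne
    have hpos : 1 ≤ lam r := by have := hlam.2 r; omega
    apply h
    apply isPar_sub hlam r _ hpos
    intro j hj
    exfalso
    rw [Fin.lt_def] at hj
    have := j.isLt
    omega

lemma class_add {N : ℕ} {mu : Fin N → ℤ} (hmu : IsPar mu) (c : Fin N)
    (h : ¬ IsPar (mu + ee c)) :
    ∃ h1 : 0 < (c:ℕ), mu ⟨(c:ℕ)-1, by omega⟩ = mu c := by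
  by_cases h1 : 0 < (c:ℕ)
  · refine ⟨h1, ?_⟩
    have hcN : (c:ℕ)-1 < N := by have := c.isLt; omega
    set c' : Fin N := ⟨(c:ℕ)-1, hcN⟩ with hc'
    have hlec : c' ≤ c := by rw [Fin.le_def]; simp [hc']
    have hle : mu c ≤ mu c' := hmu.1 c' c hlec
    by_contra hne
    apply h
    apply isPar_add hmu c
    intro i hi
    have hi2 : i ≤ c' := by
      rw [Fin.le_def]
      rw [Fin.lt_def] at hi
      simp [hc']
      omega
    have := hmu.1 i c' hi2
    omega
  · exfalso
    apply h
    apply isPar_add hmu c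
    intro i hi
    exfalso
    rw [Fin.lt_def] at hi
    omega

lemma skewSchur_sub_zero {N : ℕ} {lam mu : Fin N → ℤ} (hlam : IsPar lam) (hmu : IsPar mu)
    (r : Fin N) (h : ¬ IsPar (lam - ee r)) : skewSchur N (lam - ee r) mu = 0 := by
  rcases class_sub hlam r h with ⟨h1, heq⟩ | ⟨h1, heq⟩
  · set r' : Fin N := ⟨(r:ℕ)+1, h1⟩ with hr'
    apply Matrix.det_zero_of_row_eq (i := r) (j := r')
    · rw [Fin.ne_iff_vne]; simp [hr']
    · funext j
      show hh N ((lam - ee r) r - mu j - (r:ℤ) + (j:ℤ))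
        = hh N ((lam - ee r) r' - mu j - (r':ℤ) + (j:ℤ))
      have e1 : (lam - ee r) r = lam r - 1 := by simp [ee]
      have e2 : (lam - ee r) r' = lam r := by
        have : r' ≠ r := by rw [Fin.ne_iff_vne]; simp [hr']
        simp [ee, this, heq]
      have e3 : ((r' : Fin N) : ℤ) = (r:ℤ) + 1 := by simp [hr']
      rw [e1, e2, e3]
      congr 1
      ring
  · apply Matrix.det_eq_zero_of_row_eq_zero (i := r)
    intro j
    show hh N ((lam - ee r) r - mu j - (r:ℤ) + (j:ℤ)) = 0
    have e1 : (lam - ee r) r = lam r - 1 := by simp [ee]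
    rw [e1, hh, if_neg]
    have h2 := hmu.2 j
    have h3 : (j:ℕ) < N := j.isLt
    have h4 : ((j:ℕ):ℤ) < ((r:ℕ):ℤ) + 1 := by exact_mod_cast (by omega : (j:ℕ) < (r:ℕ)+1)
    omega

lemma skewSchur_add_zero {N : ℕ} {lam mu : Fin N → ℤ} (hmu : IsPar mu)
    (c : Fin N) (h : ¬ IsPar (mu + ee c)) : skewSchur N lam (mu + ee c) = 0 := by
  obtain ⟨h1, heq⟩ := class_add hmu c h
  have hcN : (c:ℕ)-1 < N := by have := c.isLt; omega
  set c' : Fin N := ⟨(c:ℕ)-1, hcN⟩ with hc'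
  apply Matrix.det_zero_of_column_eq (i := c') (j := c)
  · rw [Fin.ne_iff_vne]; simp [hc']; omega
  · intro k
    show hh N (lam k - (mu + ee c) c' - (k:ℤ) + (c':ℤ))
      = hh N (lam k - (mu + ee c) c - (k:ℤ) + (c:ℤ))
    have e1 : (mu + ee c) c' = mu c := by
      have hne : c' ≠ c := by rw [Fin.ne_iff_vne]; simp [hc']; omega
      simp [ee, hne, heq]
    have e2 : (mu + ee c) c = mu c + 1 := by simp [ee]
    have e3 : ((c' : Fin N) : ℤ) = (c:ℤ) - 1 := by
      simp [hc']
      omega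
    rw [e1, e2, e3]
    congr 1
    ring

end aux

theorem nabla_skewSchur (N : ℕ) (a b : ℤ) (hab : a + b = (N : ℤ) - 1)
    (lam mu : Fin N → ℤ) (hlam : IsPar lam) (hmu : IsPar mu) :
    nabla N (skewSchur N lam mu) =
      (∑ i ∈ Finset.univ.filter (fun i : Fin N => IsPar (lam - ee i)),
        C ((lam i - ((i : ℤ) + 1)) + a) * skewSchur N (lam - ee i) mu)
      + ∑ i ∈ Finset.univ.filter (fun i : Fin N => IsPar (mu + ee i)),
        C (b - (mu i - ((i : ℤ) + 1))) * skewSchur N lam (mu + ee i) := by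
  classical
  set A : Matrix (Fin N) (Fin N) (MvPolynomial (Fin N) ℤ) :=
    Matrix.of (fun i j : Fin N => hh N (lam i - mu j - (i : ℤ) + (j : ℤ))) with hA
  have hS : skewSchur N lam mu = A.det := rfl
  rw [hS, nabla_det]
  have hent : ∀ r : Fin N, (fun j => nabla N (A r j))
      = (fun j : Fin N => C ((lam r - ((r:ℤ)+1)) + a)
            * hh N (lam r - mu j - (r:ℤ) + (j:ℤ) - 1))
        + (fun j : Fin N => C (b - (mu j - ((j:ℤ)+1)))
            * hh N (lam r - mu j - (r:ℤ) + (j:ℤ) - 1)) := by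
    intro r
    funext j
    show nabla N (hh N (lam r - mu j - (r:ℤ) + (j:ℤ))) = _
    rw [nabla_hh]
    simp only [Pi.add_apply]
    rw [← add_mul, ← C_add]
    congr 2
    omega
  rw [Finset.sum_congr rfl (fun r _ => by rw [hent r, Matrix.det_updateRow_add]),
    Finset.sum_add_distrib]
  congr 1
  · have part1 : ∀ r : Fin N,
        (A.updateRow r fun j : Fin N => C ((lam r - ((r:ℤ)+1)) + a)
            * hh N (lam r - mu j - (r:ℤ) + (j:ℤ) - 1)).det
          = C ((lam r - ((r:ℤ)+1)) + a) * skewSchur N (lam - ee r) mu := by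
      intro r
      have hsmul : (fun j : Fin N => C ((lam r - ((r:ℤ)+1)) + a)
            * hh N (lam r - mu j - (r:ℤ) + (j:ℤ) - 1))
          = (C ((lam r - ((r:ℤ)+1)) + a) : MvPolynomial (Fin N) ℤ)
              • (fun j : Fin N => hh N (lam r - mu j - (r:ℤ) + (j:ℤ) - 1)) := rfl
      rw [hsmul, Matrix.det_updateRow_smul]
      congr 1
      have hmat : A.updateRow r (fun j : Fin N => hh N (lam r - mu j - (r:ℤ) + (j:ℤ) - 1))
          = Matrix.of (fun i j : Fin N => hh N ((lam - ee r) i - mu j - (i:ℤ) + (j:ℤ))) := by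
        funext i j
        rw [Matrix.updateRow_apply]
        by_cases hir : i = r
        · rw [if_pos hir, hir]
          show hh N (lam r - mu j - (r:ℤ) + (j:ℤ) - 1)
            = hh N ((lam - ee r) r - mu j - (r:ℤ) + (j:ℤ))
          have he : (lam - ee r) r = lam r - 1 := by simp [ee]
          rw [he]; congr 1; ring
        · rw [if_neg hir]
          show hh N (lam i - mu j - (i:ℤ) + (j:ℤ))
            = hh N ((lam - ee r) i - mu j - (i:ℤ) + (j:ℤ))
          have he : (lam - ee r) i = lam i := by simp [ee, hir]
          rw [he]
      rw [hmat]
      rfl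
    rw [Finset.sum_congr rfl fun r _ => part1 r]
    refine (Finset.sum_filter_of_ne fun r _ hne => ?_).symm
    by_contra hpar
    exact hne (by rw [skewSchur_sub_zero hlam hmu r hpar, mul_zero])
  · rw [sum_det_updateRow_swap A (fun j : Fin N => C (b - (mu j - ((j:ℤ)+1))))
      (fun r j : Fin N => hh N (lam r - mu j - (r:ℤ) + (j:ℤ) - 1))]
    have part2 : ∀ c : Fin N,
        (A.updateCol c fun i : Fin N => hh N (lam i - mu c - (i:ℤ) + (c:ℤ) - 1)).det
          = skewSchur N lam (mu + ee c) := by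
      intro c
      have hmat : A.updateCol c (fun i : Fin N => hh N (lam i - mu c - (i:ℤ) + (c:ℤ) - 1))
          = Matrix.of (fun i j : Fin N => hh N (lam i - (mu + ee c) j - (i:ℤ) + (j:ℤ))) := by
        funext i j
        rw [Matrix.updateCol_apply]
        by_cases hjc : j = c
        · rw [if_pos hjc, hjc]
          show hh N (lam i - mu c - (i:ℤ) + (c:ℤ) - 1)
            = hh N (lam i - (mu + ee c) c - (i:ℤ) + (c:ℤ))
          have he : (mu + ee c) c = mu c + 1 := by simp [ee]
          rw [he]; congr 1; ring
        · rw [if_neg hjc]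
          show hh N (lam i - mu j - (i:ℤ) + (j:ℤ))
            = hh N (lam i - (mu + ee c) j - (i:ℤ) + (j:ℤ))
          have he : (mu + ee c) j = mu j := by simp [ee, hjc]
          rw [he]
      rw [hmat]
      rfl
    rw [Finset.sum_congr rfl fun c _ => by rw [part2 c]]
    refine (Finset.sum_filter_of_ne fun c _ hne => ?_).symm
    by_contra hpar
    exact hne (by rw [skewSchur_add_zero hmu c hpar, mul_zero])
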